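/- The linear program: minimize (1/t)·Σ_{i=1}^{s} Σ_{j=1}^{σ} (1/j)·x_{i,j} subject to Σ_j x_{i,j} ≥ ⌈c/γ⌉ for all i, Σ_j (j−1)x_{i,j} ≤ s−1 for all i, and x_{i,j} ≥ 0, has optimal value (s/t)·max( (1/σ)⌈c/γ⌉, max_{2≤j≤σ} ( (2/j)⌈c/γ⌉ − (s−1)/(j(j−1)) ) ). -/

import Mathlib

private lemma key1 (p m : ℝ) (hp : 2 ≤ p) (hm : 0 ≤ m)
    (h : 0 ≤ (p - m - 1) * (p - m - 2)) :
    2 / p - 1 / (p * (p - 1)) * m ≤ 1 / (m + 1) := by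
  have hp0 : (0:ℝ) < p := by linarith
  have hp1 : (0:ℝ) < p - 1 := by linarith
  have hm0 : (0:ℝ) < m + 1 := by linarith
  have h2 : 2 / p - 1 / (p * (p - 1)) * m = (2 * (p - 1) - m) / (p * (p - 1)) := by
    field_simp
  rw [h2, div_le_div_iff₀ (by positivity) hm0]
  nlinarith [h]

private lemma sum_one {n : ℕ} (g : Fin n → ℝ) (j₁ : Fin n) (A : ℝ) :
    ∑ j : Fin n, g j * (if j = j₁ then A else 0) = g j₁ * A := by
  simp [mul_ite, Finset.sum_ite_eq']

private lemma sum_two {n : ℕ} (g : Fin n → ℝ) (j₁ j₂ : Fin n) (A B : ℝ) :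
    ∑ j : Fin n, g j * ((if j = j₁ then A else 0) + (if j = j₂ then B else 0))
      = g j₁ * A + g j₂ * B := by
  simp [mul_add, mul_ite, Finset.sum_add_distrib, Finset.sum_ite_eq']

set_option maxHeartbeats 2000000 in
theorem supplier_lp_value (s c t σ γ : ℕ)
    (hs : 1 ≤ s) (hc : 1 ≤ c) (ht : 1 ≤ t) (hσ : 2 ≤ σ) (hγ : 1 ≤ γ) :
    IsLeast
      {v : ℝ | ∃ x : Fin s → Fin σ → ℝ, (∀ i j, 0 ≤ x i j) ∧
        (∀ i, ((⌈(c : ℚ) / γ⌉ : ℤ) : ℝ) ≤ ∑ j, x i j) ∧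
        (∀ i, ∑ j : Fin σ, ((j : ℕ) : ℝ) * x i j ≤ (s : ℝ) - 1) ∧
        v = (1 / (t : ℝ)) * ∑ i, ∑ j : Fin σ, (1 / (((j : ℕ) : ℝ) + 1)) * x i j}
      ((s : ℝ) / t *
        max ((1 / (σ : ℝ)) * ((⌈(c : ℚ) / γ⌉ : ℤ) : ℝ))
          ((Finset.Icc 2 σ).sup' (Finset.nonempty_Icc.2 hσ)
            (fun j : ℕ => 2 / (j : ℝ) * ((⌈(c : ℚ) / γ⌉ : ℤ) : ℝ) -
              ((s : ℝ) - 1) / ((j : ℝ) * ((j : ℝ) - 1))))) := by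
  have hceil : (1:ℤ) ≤ ⌈(c : ℚ) / γ⌉ := by
    have h0 : (0:ℚ) < (c:ℚ)/γ := by
      apply div_pos
      · exact_mod_cast hc
      · exact_mod_cast hγ
    exact Int.ceil_pos.mpr h0
  set K : ℝ := ((⌈(c : ℚ) / γ⌉ : ℤ) : ℝ) with hKdef
  set S : ℝ := (s : ℝ) - 1 with hSdef
  have hK1 : (1:ℝ) ≤ K := by rw [hKdef]; exact_mod_cast hceil
  have hK0 : (0:ℝ) ≤ K := by linarith
  have hs1 : (1:ℝ) ≤ (s:ℝ) := by exact_mod_cast hs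
  have hS0 : (0:ℝ) ≤ S := by rw [hSdef]; linarith
  have hσr : (2:ℝ) ≤ (σ:ℝ) := by exact_mod_cast hσ
  have ht0 : (0:ℝ) < t := by exact_mod_cast ht
  set Kn : ℕ := (⌈(c : ℚ) / γ⌉).toNat with hKndef
  have hKn : ((Kn:ℕ):ℝ) = K := by
    rw [hKdef, hKndef]
    exact_mod_cast congrArg (fun z : ℤ => (z : ℝ))
      (Int.toNat_of_nonneg (by omega : (0:ℤ) ≤ ⌈(c : ℚ) / γ⌉))
  have hKn1 : 1 ≤ Kn := by omega
  clear_value K S Kn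
  have hSc : ((s-1:ℕ):ℝ) = S := by
    rw [hSdef, Nat.cast_sub hs, Nat.cast_one]
  constructor
  · -- membership : an optimal solution exists
    simp only [Set.mem_setOf_eq]
    by_cases hcase : (σ - 1) * Kn ≤ s - 1
    · -- slack case: all mass at j = σ, value K/σ
      have hσ1 : σ - 1 < σ := by omega
      have hσc : ((σ-1:ℕ):ℝ) = (σ:ℝ) - 1 := by
        rw [Nat.cast_sub (by omega : 1 ≤ σ), Nat.cast_one]
      have hcs : ((σ:ℝ)-1) * K ≤ S := by
        have hc' : ((σ-1:ℕ):ℝ) * ((Kn:ℕ):ℝ) ≤ ((s-1:ℕ):ℝ) := by exact_mod_cast hcase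
        rwa [hKn, hSc, hσc] at hc'
      -- the sup' part is at most K/σ here
      have hsup_le : (Finset.Icc 2 σ).sup' (Finset.nonempty_Icc.2 hσ)
          (fun j : ℕ => 2 / (j : ℝ) * K - S / ((j : ℝ) * ((j : ℝ) - 1)))
          ≤ 1 / (σ:ℝ) * K := by
        apply Finset.sup'_le
        intro j hj
        obtain ⟨hj2, hjσ⟩ := Finset.mem_Icc.mp hj
        have hjr2 : (2:ℝ) ≤ (j:ℝ) := by exact_mod_cast hj2
        have hjrσ : (j:ℝ) ≤ (σ:ℝ) := by exact_mod_cast hjσ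
        have hd : (0:ℝ) < (j:ℝ) * ((j:ℝ) - 1) := mul_pos (by linarith) (by linarith)
        have hkey := key1 (j:ℝ) ((σ:ℝ)-1) hjr2 (by linarith) (by
          nlinarith [mul_nonneg (by linarith : (0:ℝ) ≤ (σ:ℝ)-(j:ℝ))
            (by linarith : (0:ℝ) ≤ (σ:ℝ)-(j:ℝ)+1)])
        have hσeq : (σ:ℝ) - 1 + 1 = (σ:ℝ) := by ring
        rw [hσeq] at hkey
        -- hkey : 2/j - 1/(j(j-1))*(σ-1) ≤ 1/σ
        have h1 : ((σ:ℝ)-1)*K / ((j:ℝ)*((j:ℝ)-1)) ≤ S / ((j:ℝ)*((j:ℝ)-1)) := by gcongr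
        calc 2/(j:ℝ)*K - S/((j:ℝ)*((j:ℝ)-1))
            ≤ 2/(j:ℝ)*K - ((σ:ℝ)-1)*K/((j:ℝ)*((j:ℝ)-1)) := by linarith [h1]
          _ = K * (2/(j:ℝ) - 1/((j:ℝ)*((j:ℝ)-1))*((σ:ℝ)-1)) := by ring
          _ ≤ K * (1/(σ:ℝ)) := mul_le_mul_of_nonneg_left hkey hK0
          _ = 1/(σ:ℝ)*K := by ring
      rw [max_eq_left hsup_le]
      refine ⟨fun _ j => if j = (⟨σ-1, hσ1⟩ : Fin σ) then K else 0, ?_, ?_, ?_, ?_⟩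
      · intro i j
        dsimp only
        split_ifs
        exacts [hK0, le_rfl]
      · intro i
        have h := sum_one (fun _ : Fin σ => (1:ℝ)) ⟨σ-1, hσ1⟩ K
        simp only [one_mul] at h
        rw [h]
      · intro i
        rw [sum_one (fun j : Fin σ => ((j:ℕ):ℝ))]
        show ((σ-1:ℕ):ℝ) * K ≤ S
        rw [hσc]
        exact hcs
      · have hin : ∑ j : Fin σ, (1 / (((j:ℕ):ℝ) + 1)) *
            (if j = (⟨σ-1, hσ1⟩ : Fin σ) then K else 0) = 1/(σ:ℝ) * K := by
          rw [sum_one (fun j : Fin σ => 1 / (((j:ℕ):ℝ) + 1))]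
          show (1 / (((σ-1:ℕ):ℝ) + 1)) * K = _
          rw [hσc]
          have : (σ:ℝ) - 1 + 1 = (σ:ℝ) := by ring
          rw [this]
        simp only [hin]
        rw [Finset.sum_const, Finset.card_univ, Fintype.card_fin, nsmul_eq_mul]
        ring
    · -- tight case: mass split between j = q+1 and j = q+2 (1-based)
      push_neg at hcase
      have hKn0 : 0 < Kn := hKn1
      set q : ℕ := (s-1)/Kn with hqdef
      clear_value q
      have hqlt : q < σ - 1 := by
        rw [hqdef]
        exact Nat.div_lt_of_lt_mul (by rwa [Nat.mul_comm] at hcase)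
      have hjσn : q + 2 ≤ σ := by omega
      have hlow : q * Kn ≤ s - 1 := by
        rw [hqdef]; exact Nat.div_mul_le_self _ _
      have hhigh : s - 1 < (q+1) * Kn := by
        rw [hqdef]
        exact (Nat.div_lt_iff_lt_mul hKn0).mp (Nat.lt_succ_self _)
      have hq0 : (0:ℝ) ≤ (q:ℝ) := Nat.cast_nonneg q
      have hlowR : (q:ℝ) * K ≤ S := by
        have h' : ((q:ℕ):ℝ) * ((Kn:ℕ):ℝ) ≤ ((s-1:ℕ):ℝ) := by exact_mod_cast hlow
        rwa [hKn, hSc] at h'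
      have hhighR : S ≤ ((q:ℝ)+1) * K := by
        have h' : ((s-1:ℕ):ℝ) ≤ (((q+1)*Kn:ℕ):ℝ) := by exact_mod_cast hhigh.le
        rw [hSc] at h'
        push_cast at h'
        rwa [hKn] at h'
      have h1σ : q < σ := by omega
      have h2σ : q + 1 < σ := by omega
      have hA : (0:ℝ) ≤ ((q:ℝ)+1)*K - S := by linarith
      have hB : (0:ℝ) ≤ S - (q:ℝ)*K := by linarith
      have hpσ : (q:ℝ) + 2 ≤ (σ:ℝ) := by exact_mod_cast hjσn
      -- every term of the sup is at most the value V = 2K/(q+2) - S/((q+2)(q+1))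
      have hcore : ∀ j ∈ Finset.Icc 2 σ, 2/(j:ℝ)*K - S/((j:ℝ)*((j:ℝ)-1))
          ≤ 2/((q:ℝ)+2)*K - S/(((q:ℝ)+2)*((q:ℝ)+1)) := by
        intro j hj
        obtain ⟨hj2, hjσ'⟩ := Finset.mem_Icc.mp hj
        have hjr2 : (2:ℝ) ≤ (j:ℝ) := by exact_mod_cast hj2
        have hd : (0:ℝ) < (j:ℝ)*((j:ℝ)-1) := mul_pos (by linarith) (by linarith)
        have hdp : (0:ℝ) < ((q:ℝ)+2)*((q:ℝ)+1) := by positivity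
        have hnum : 0 ≤ ((j:ℝ) - ((q:ℝ)+2)) *
            (2*K*((q:ℝ)+1)*((j:ℝ)-1) - S*((j:ℝ)+(q:ℝ)+1)) := by
          rcases Nat.lt_trichotomy j (q+2) with hlt | heq | hgt
          · have hjle : (j:ℝ) + 1 ≤ (q:ℝ)+2 := by exact_mod_cast hlt
            have hb : 2*K*((q:ℝ)+1)*((j:ℝ)-1) - S*((j:ℝ)+(q:ℝ)+1) ≤ 0 := by
              nlinarith [mul_nonneg hB (by linarith : (0:ℝ) ≤ (j:ℝ)+(q:ℝ)+1),
                mul_nonneg (mul_nonneg hK0 (by linarith : (0:ℝ) ≤ (q:ℝ)+2))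
                  (by linarith : (0:ℝ) ≤ (q:ℝ)+1-(j:ℝ))]
            nlinarith [mul_nonneg (by linarith : (0:ℝ) ≤ ((q:ℝ)+2)-(j:ℝ))
              (by linarith : (0:ℝ) ≤ -(2*K*((q:ℝ)+1)*((j:ℝ)-1) - S*((j:ℝ)+(q:ℝ)+1)))]
          · have hjr : (j:ℝ) = (q:ℝ)+2 := by exact_mod_cast heq
            rw [hjr, sub_self, zero_mul]
          · have hjge : (q:ℝ)+3 ≤ (j:ℝ) := by exact_mod_cast hgt
            have hb : 0 ≤ 2*K*((q:ℝ)+1)*((j:ℝ)-1) - S*((j:ℝ)+(q:ℝ)+1) := by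
              nlinarith [mul_nonneg hA (by linarith : (0:ℝ) ≤ (j:ℝ)+(q:ℝ)+1),
                mul_nonneg (mul_nonneg hK0 (by linarith : (0:ℝ) ≤ (q:ℝ)+1))
                  (by linarith : (0:ℝ) ≤ (j:ℝ)-(q:ℝ)-3)]
            exact mul_nonneg (by linarith) hb
        have heq2 : (2/((q:ℝ)+2)*K - S/(((q:ℝ)+2)*((q:ℝ)+1)))
            - (2/(j:ℝ)*K - S/((j:ℝ)*((j:ℝ)-1)))
            = ((j:ℝ) - ((q:ℝ)+2)) * (2*K*((q:ℝ)+1)*((j:ℝ)-1) - S*((j:ℝ)+(q:ℝ)+1))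
              / ((((q:ℝ)+2)*((q:ℝ)+1)) * ((j:ℝ)*((j:ℝ)-1))) := by
          have hj0' : (j:ℝ) ≠ 0 := (by linarith : (0:ℝ) < j).ne'
          have hj1' : (j:ℝ) - 1 ≠ 0 := (by linarith : (0:ℝ) < (j:ℝ) - 1).ne'
          field_simp
          ring
        have hq := div_nonneg hnum (mul_pos hdp hd).le
        linarith
      have hKσV : 1/(σ:ℝ)*K ≤ 2/((q:ℝ)+2)*K - S/(((q:ℝ)+2)*((q:ℝ)+1)) := by
        have h1 := hcore σ (Finset.mem_Icc.mpr ⟨hσ, le_refl σ⟩)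
        have hd : (0:ℝ) < (σ:ℝ)*((σ:ℝ)-1) := mul_pos (by linarith) (by linarith)
        have hSσ : S ≤ ((σ:ℝ)-1)*K := by
          nlinarith [mul_nonneg hK0 (by linarith : (0:ℝ) ≤ (σ:ℝ)-(q:ℝ)-2)]
        have heq3 : (2/(σ:ℝ)*K - S/((σ:ℝ)*((σ:ℝ)-1))) - 1/(σ:ℝ)*K
            = (((σ:ℝ)-1)*K - S)/((σ:ℝ)*((σ:ℝ)-1)) := by
          have hσ0' : (σ:ℝ) ≠ 0 := (by linarith : (0:ℝ) < σ).ne'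
          have hσ1' : (σ:ℝ) - 1 ≠ 0 := (by linarith : (0:ℝ) < (σ:ℝ) - 1).ne'
          field_simp
          ring
        have h2 : 0 ≤ (((σ:ℝ)-1)*K - S)/((σ:ℝ)*((σ:ℝ)-1)) := div_nonneg (by linarith) hd.le
        linarith
      have hMeq : max (1/(σ:ℝ)*K) ((Finset.Icc 2 σ).sup' (Finset.nonempty_Icc.2 hσ)
            (fun j : ℕ => 2/(j:ℝ)*K - S/((j:ℝ)*((j:ℝ)-1))))
          = 2/((q:ℝ)+2)*K - S/(((q:ℝ)+2)*((q:ℝ)+1)) := by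
        apply le_antisymm
        · exact max_le hKσV (Finset.sup'_le _ _ hcore)
        · refine le_trans ?_ (le_max_right _ _)
          have hmem : (q+2) ∈ Finset.Icc 2 σ := Finset.mem_Icc.mpr ⟨by omega, hjσn⟩
          refine le_trans (le_of_eq ?_)
            (Finset.le_sup' (f := fun j : ℕ => 2/(j:ℝ)*K - S/((j:ℝ)*((j:ℝ)-1))) hmem)
          push_cast
          ring
      rw [hMeq]
      refine ⟨fun _ j => (if j = (⟨q, h1σ⟩ : Fin σ) then ((q:ℝ)+1)*K - S else 0)
          + (if j = (⟨q+1, h2σ⟩ : Fin σ) then S - (q:ℝ)*K else 0), ?_, ?_, ?_, ?_⟩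
      · intro i j
        dsimp only
        split_ifs <;> linarith
      · intro i
        have h := sum_two (fun _ : Fin σ => (1:ℝ)) ⟨q, h1σ⟩ ⟨q+1, h2σ⟩
          (((q:ℝ)+1)*K - S) (S - (q:ℝ)*K)
        simp only [one_mul] at h
        rw [h]
        linarith
      · intro i
        rw [sum_two (fun j : Fin σ => ((j:ℕ):ℝ))]
        show ((q:ℕ):ℝ) * (((q:ℝ)+1)*K - S) + (((q+1:ℕ)):ℝ) * (S - (q:ℝ)*K) ≤ S
        push_cast
        have heq4 : (q:ℝ) * (((q:ℝ)+1)*K - S) + ((q:ℝ)+1) * (S - (q:ℝ)*K) = S := by ring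
        linarith
      · have hin : ∑ j : Fin σ, (1 / (((j:ℕ):ℝ) + 1)) *
            ((if j = (⟨q, h1σ⟩ : Fin σ) then ((q:ℝ)+1)*K - S else 0)
             + (if j = (⟨q+1, h2σ⟩ : Fin σ) then S - (q:ℝ)*K else 0))
            = 2/((q:ℝ)+2)*K - S/(((q:ℝ)+2)*((q:ℝ)+1)) := by
          rw [sum_two (fun j : Fin σ => 1 / (((j:ℕ):ℝ) + 1))]
          show (1 / (((q:ℕ):ℝ) + 1)) * (((q:ℝ)+1)*K - S)
              + (1 / ((((q+1:ℕ)):ℝ) + 1)) * (S - (q:ℝ)*K) = _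
          push_cast
          have hq1 : ((q:ℝ)+1) ≠ 0 := by positivity
          have hq2 : ((q:ℝ)+2) ≠ 0 := by positivity
          field_simp
          ring
        simp only [hin]
        rw [Finset.sum_const, Finset.card_univ, Fintype.card_fin, nsmul_eq_mul]
        ring
  · -- lower bound
    rintro v ⟨x, hx0, hx1, hx2, rfl⟩
    have hmain : ∀ i : Fin s,
        max (1/(σ:ℝ)*K) ((Finset.Icc 2 σ).sup' (Finset.nonempty_Icc.2 hσ)
          (fun j : ℕ => 2/(j:ℝ)*K - S/((j:ℝ)*((j:ℝ)-1))))
        ≤ ∑ j : Fin σ, (1 / (((j:ℕ):ℝ) + 1)) * x i j := by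
      intro i
      have dual : ∀ a b : ℝ, 0 ≤ a → 0 ≤ b →
          (∀ j : Fin σ, a - b * ((j:ℕ):ℝ) ≤ 1 / (((j:ℕ):ℝ) + 1)) →
          a * K - b * S ≤ ∑ j : Fin σ, (1 / (((j:ℕ):ℝ) + 1)) * x i j := by
        intro a b ha hb hab
        have h1 : a * K ≤ a * ∑ j, x i j := mul_le_mul_of_nonneg_left (hx1 i) ha
        have h2 : b * ∑ j : Fin σ, ((j:ℕ):ℝ) * x i j ≤ b * S :=
          mul_le_mul_of_nonneg_left (hx2 i) hb
        have h3 : a * (∑ j, x i j) - b * (∑ j : Fin σ, ((j:ℕ):ℝ) * x i j)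
            = ∑ j : Fin σ, (a - b * ((j:ℕ):ℝ)) * x i j := by
          rw [Finset.mul_sum, Finset.mul_sum, ← Finset.sum_sub_distrib]
          exact Finset.sum_congr rfl fun j _ => by ring
        have h4 : ∑ j : Fin σ, (a - b*((j:ℕ):ℝ)) * x i j
            ≤ ∑ j : Fin σ, (1/(((j:ℕ):ℝ)+1)) * x i j :=
          Finset.sum_le_sum fun j _ => mul_le_mul_of_nonneg_right (hab j) (hx0 i j)
        linarith
      apply max_le
      · have hcoef : ∀ j : Fin σ, 1/(σ:ℝ) - 0 * ((j:ℕ):ℝ) ≤ 1 / (((j:ℕ):ℝ) + 1) := by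
          intro j
          have hj' : (j:ℕ) + 1 ≤ σ := j.isLt
          have hj : ((j:ℕ):ℝ) + 1 ≤ (σ:ℝ) := by exact_mod_cast hj'
          have h0 : (0:ℝ) < ((j:ℕ):ℝ) + 1 := by positivity
          rw [zero_mul, sub_zero]
          exact one_div_le_one_div_of_le h0 hj
        have h := dual (1/(σ:ℝ)) 0 (by positivity) le_rfl hcoef
        linarith
      · apply Finset.sup'_le
        intro j0 hj0
        obtain ⟨hj2, hjσ⟩ := Finset.mem_Icc.mp hj0
        have hp2 : (2:ℝ) ≤ (j0:ℝ) := by exact_mod_cast hj2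
        have hd : (0:ℝ) < (j0:ℝ)*((j0:ℝ)-1) := mul_pos (by linarith) (by linarith)
        have hcoef : ∀ j : Fin σ, 2/(j0:ℝ) - 1/((j0:ℝ)*((j0:ℝ)-1)) * ((j:ℕ):ℝ)
            ≤ 1 / (((j:ℕ):ℝ) + 1) := by
          intro j
          have hm0 : (0:ℝ) ≤ ((j:ℕ):ℝ) := Nat.cast_nonneg _
          have hsign : 0 ≤ ((j0:ℝ) - ((j:ℕ):ℝ) - 1) * ((j0:ℝ) - ((j:ℕ):ℝ) - 2) := by
            rcases le_or_gt j0 ((j:ℕ)+1) with hle | hlt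
            · have hle' : (j0:ℝ) ≤ ((j:ℕ):ℝ)+1 := by exact_mod_cast hle
              nlinarith [mul_nonneg (by linarith : (0:ℝ) ≤ ((j:ℕ):ℝ)+1-(j0:ℝ))
                (by linarith : (0:ℝ) ≤ ((j:ℕ):ℝ)+2-(j0:ℝ))]
            · have hlt' : ((j:ℕ):ℝ)+2 ≤ (j0:ℝ) := by exact_mod_cast hlt
              nlinarith [mul_nonneg (by linarith : (0:ℝ) ≤ (j0:ℝ)-((j:ℕ):ℝ)-2)
                (by linarith : (0:ℝ) ≤ (j0:ℝ)-((j:ℕ):ℝ)-1)]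
          exact key1 _ _ hp2 hm0 hsign
        have h := dual (2/(j0:ℝ)) (1/((j0:ℝ)*((j0:ℝ)-1))) (by positivity)
          (by positivity) hcoef
        have he : 1/((j0:ℝ)*((j0:ℝ)-1)) * S = S/((j0:ℝ)*((j0:ℝ)-1)) := by ring
        linarith
    calc (s:ℝ)/t * max (1/(σ:ℝ)*K) ((Finset.Icc 2 σ).sup' (Finset.nonempty_Icc.2 hσ)
          (fun j : ℕ => 2/(j:ℝ)*K - S/((j:ℝ)*((j:ℝ)-1))))
        = 1/(t:ℝ) * ((s:ℝ) * max (1/(σ:ℝ)*K) ((Finset.Icc 2 σ).sup'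
            (Finset.nonempty_Icc.2 hσ)
            (fun j : ℕ => 2/(j:ℝ)*K - S/((j:ℝ)*((j:ℝ)-1))))) := by ring
      _ ≤ 1/(t:ℝ) * ∑ i, ∑ j : Fin σ, (1 / (((j:ℕ):ℝ) + 1)) * x i j := by
          apply mul_le_mul_of_nonneg_left ?_ (by positivity)
          have hsum : (s:ℝ) * max (1/(σ:ℝ)*K) ((Finset.Icc 2 σ).sup'
              (Finset.nonempty_Icc.2 hσ)
              (fun j : ℕ => 2/(j:ℝ)*K - S/((j:ℝ)*((j:ℝ)-1))))
              = ∑ _i : Fin s, max (1/(σ:ℝ)*K) ((Finset.Icc 2 σ).sup'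
                (Finset.nonempty_Icc.2 hσ)
                (fun j : ℕ => 2/(j:ℝ)*K - S/((j:ℝ)*((j:ℝ)-1)))) := by
            rw [Finset.sum_const, Finset.card_univ, Fintype.card_fin, nsmul_eq_mul]
          rw [hsum]
          exact Finset.sum_le_sum fun i _ => hmain i
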